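/- Let 2 ≤ k ≤ n, α > 0 and N₀ > 0. There exists a constant c₀ > 0 depending only on n, k, α and N₀ such that every λ ∈ Γ_{k−1} with σ_k(λ) + α σ_{k−1}(λ) ≥ N₀ satisfies σ_{k−1}(λ) ≥ c₀. -/

import Mathlib

open scoped BigOperators

noncomputable section

/-- The `j`-th elementary symmetric function of the entries of `lam` indexed by `T`
(`j : ℤ`, with value `0` for `j < 0`). -/
def sigmaOn {n : ℕ} (T : Finset (Fin n)) (j : ℤ) (lam : Fin n → ℝ) : ℝ :=
  if 0 ≤ j then ∑ s ∈ T.powersetCard j.toNat, ∏ i ∈ s, lam i else 0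

/-- The `j`-th elementary symmetric polynomial `σ_j(λ)`. -/
def esymmR {n : ℕ} (j : ℤ) (lam : Fin n → ℝ) : ℝ := sigmaOn Finset.univ j lam

/-- The Garding cone `Γ_k`. -/
def GammaCone (n k : ℕ) : Set (Fin n → ℝ) :=
  {lam | ∀ i : ℕ, 1 ≤ i → i ≤ k → 0 < esymmR (i : ℤ) lam}

/-- `S_j(λ) = σ_j(λ) + α σ_{j-1}(λ)`. -/
def Sfun {n : ℕ} (α : ℝ) (j : ℤ) (lam : Fin n → ℝ) : ℝ :=
  esymmR j lam + α * esymmR (j - 1) lam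

/-- The cone `Γ̃_k = Γ_{k-1} ∩ {λ : S_k(λ) > 0}`. -/
def GammaTilde (n k : ℕ) (α : ℝ) : Set (Fin n → ℝ) :=
  GammaCone n (k - 1) ∩ {lam | 0 < Sfun α (k : ℤ) lam}

/-- `S_k^{pp}(λ) = σ_{k-1}(λ|p) + α σ_{k-2}(λ|p)`, where `(λ|p)` deletes the
`p`-th entry of `λ`. -/
def SD {n : ℕ} (α : ℝ) (k : ℤ) (lam : Fin n → ℝ) (p : Fin n) : ℝ :=
  sigmaOn (Finset.univ.erase p) (k - 1) lam + α * sigmaOn (Finset.univ.erase p) (k - 2) lam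

/-- `S_k^{pp,qq}(λ) = σ_{k-2}(λ|pq) + α σ_{k-3}(λ|pq)` for `p ≠ q`, where `(λ|pq)`
deletes the `p`-th and `q`-th entries of `λ`. -/
def SDD {n : ℕ} (α : ℝ) (k : ℤ) (lam : Fin n → ℝ) (p q : Fin n) : ℝ :=
  sigmaOn ((Finset.univ.erase p).erase q) (k - 2) lam
    + α * sigmaOn ((Finset.univ.erase p).erase q) (k - 3) lam

namespace SigmaAux
open Polynomial

/-- A real polynomial is real-rooted if it has as many real roots (with multiplicity)
as its degree. -/
def RR (p : ℝ[X]) : Prop := Multiset.card p.roots = p.natDegree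

lemma rr_derivative {p : ℝ[X]} (h : RR p) :
    RR (derivative p) ∧ (derivative p).natDegree = p.natDegree - 1 := by
  rcases Nat.eq_zero_or_pos p.natDegree with h0 | h0
  · obtain ⟨a, rfl⟩ := Polynomial.natDegree_eq_zero.mp h0
    constructor
    · simp [RR]
    · simp
  · have hc : Multiset.card p.roots ≤ Multiset.card (derivative p).roots + 1 :=
      p.card_roots_le_derivative
    have h1 : (derivative p).natDegree ≤ p.natDegree - 1 := natDegree_derivative_le p
    have h2 : Multiset.card (derivative p).roots ≤ (derivative p).natDegree :=
      (derivative p).card_roots'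
    unfold RR at h ⊢
    omega

lemma rr_iterate {p : ℝ[X]} (h : RR p) (t : ℕ) :
    RR (derivative^[t] p) ∧ (derivative^[t] p).natDegree = p.natDegree - t := by
  induction t with
  | zero => simpa using h
  | succ m ih =>
      rw [Function.iterate_succ_apply']
      obtain ⟨ih1, ih2⟩ := ih
      obtain ⟨j1, j2⟩ := rr_derivative ih1
      exact ⟨j1, by omega⟩

lemma reverse_X_sub_C (r : ℝ) : (X - C r).reverse = C (-r) * X + 1 := by
  ext i
  rw [coeff_reverse, natDegree_X_sub_C]
  match i with
  | 0 => simp [revAt_le (show 0 ≤ 1 by omega)]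
  | 1 => simp [revAt_le (show 1 ≤ 1 by omega), Polynomial.coeff_one]
  | (m+2) => simp [revAt_eq_self_of_lt (show 1 < m + 2 by omega), coeff_X, coeff_C, Polynomial.coeff_one]

lemma reverse_multiset_prod (s : Multiset ℝ[X]) :
    s.prod.reverse = (s.map Polynomial.reverse).prod := by
  induction s using Multiset.induction with
  | empty => simpa using Polynomial.reverse_C (1 : ℝ)
  | cons a s ih => simp [reverse_mul_of_domain, ih]

lemma rr_reverse {p : ℝ[X]} (h : RR p) (h0 : p.coeff 0 ≠ 0) :
    RR p.reverse ∧ p.reverse.natDegree = p.natDegree := by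
  have hp : p ≠ 0 := fun hz => h0 (by simp [hz])
  have hroots0 : (0 : ℝ) ∉ p.roots := by
    intro hmem
    have hz := isRoot_of_mem_roots hmem
    rw [IsRoot, ← coeff_zero_eq_eval_zero] at hz
    exact h0 hz
  set b : ℝ := p.leadingCoeff * (p.roots.map fun r => -r).prod with hb
  have hbne : b ≠ 0 := by
    apply mul_ne_zero (leadingCoeff_ne_zero.mpr hp)
    apply Multiset.prod_ne_zero
    intro hmem
    rw [Multiset.mem_map] at hmem
    obtain ⟨r, hr, hr0⟩ := hmem
    exact hroots0 (neg_eq_zero.mp hr0 ▸ hr)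
  have key : p.reverse =
      C b * ((p.roots.map fun r => r⁻¹).map fun r => X - C r).prod := by
    conv_lhs => rw [← Polynomial.C_leadingCoeff_mul_prod_multiset_X_sub_C h]
    rw [reverse_mul_of_domain, reverse_C, reverse_multiset_prod, Multiset.map_map]
    have hcongr : ∀ r ∈ p.roots,
        (Polynomial.reverse ∘ fun a => X - C a) r = C (-r) * (X - C r⁻¹) := by
      intro r hr
      have hrne : r ≠ 0 := fun hz => hroots0 (hz ▸ hr)
      simp only [Function.comp_apply, reverse_X_sub_C]
      rw [mul_sub, ← C_mul, show -r * r⁻¹ = -1 by field_simp]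
      simp
    rw [Multiset.map_congr rfl hcongr, Multiset.prod_map_mul]
    have hCprod : (Multiset.map (fun r : ℝ => C (-r)) p.roots).prod
        = C ((Multiset.map (fun r : ℝ => -r) p.roots).prod) := by
      rw [map_multiset_prod (C : ℝ →+* ℝ[X]), Multiset.map_map]
      rfl
    rw [hCprod, hb, C_mul, mul_assoc, Multiset.map_map]
    rfl
  constructor
  · unfold RR
    rw [key, roots_C_mul _ hbne, roots_multiset_prod_X_sub_C,
      natDegree_C_mul hbne, natDegree_multiset_prod_X_sub_C_eq_card]
  · rw [key, natDegree_C_mul hbne, natDegree_multiset_prod_X_sub_C_eq_card]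
    simpa [RR] using h

lemma chain_le (Q : ℕ → ℝ) (K : ℕ) (hK : 2 ≤ K) (hpos : ∀ i ≤ K, 0 < Q i)
    (hlc : ∀ i, 1 ≤ i → i + 1 ≤ K → Q (i - 1) * Q (i + 1) ≤ Q i ^ 2)
    (hle : Q (K - 1) ≤ Q 0) : Q K ≤ Q (K - 1) := by
  have hratio : ∀ i j : ℕ, i ≤ j → j + 1 ≤ K → Q (j + 1) / Q j ≤ Q (i + 1) / Q i := by
    intro i j hij hjK
    induction j, hij using Nat.le_induction with
    | base => exact le_refl _
    | succ m him ih =>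
        have h1 : Q (m + 1 + 1) / Q (m + 1) ≤ Q (m + 1) / Q m := by
          rw [div_le_div_iff₀ (hpos _ (by omega)) (hpos _ (by omega))]
          have h2 := hlc (m + 1) (by omega) (by omega)
          simp only [Nat.add_sub_cancel] at h2
          nlinarith [h2]
        exact h1.trans (ih (by omega))
  set A := Q K / Q (K - 1) with hA
  have hApos : 0 < A := div_pos (hpos K le_rfl) (hpos (K - 1) (by omega))
  have hpow : ∀ i, i ≤ K - 1 → A ^ i ≤ Q i / Q 0 := by
    intro i
    induction i with
    | zero => simp [le_div_iff₀ (hpos 0 (by omega))]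
    | succ m ih =>
        intro hm
        have hm' : m ≤ K - 1 := by omega
        have h1 : A ≤ Q (m + 1) / Q m := by
          have h2 := hratio m (K - 1) (by omega) (by omega)
          rwa [show K - 1 + 1 = K by omega] at h2
        have hQm := hpos m (by omega)
        have hQ0 := hpos 0 (by omega)
        calc A ^ (m + 1) = A ^ m * A := by ring
          _ ≤ (Q m / Q 0) * (Q (m + 1) / Q m) := by
              apply mul_le_mul (ih hm') h1 (le_of_lt hApos)
              positivity
          _ = Q (m + 1) / Q 0 := by field_simp
  have h2 : A ^ (K - 1) ≤ 1 := by
    refine (hpow (K - 1) le_rfl).trans ?_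
    rw [div_le_one (hpos 0 (by omega))]
    exact hle
  have hA1 : A ≤ 1 := by
    by_contra hlt
    push_neg at hlt
    have h3 : 1 < A ^ (K - 1) := one_lt_pow₀ hlt (by omega)
    linarith
  rwa [hA, div_le_one (hpos (K - 1) (by omega))] at hA1

set_option maxHeartbeats 1000000 in
theorem newton_Q (s : Multiset ℝ) (j : ℕ) (h1 : 1 ≤ j) (h2 : j + 1 ≤ Multiset.card s) :
    (((j - 1).factorial * (Multiset.card s - (j - 1)).factorial : ℕ) : ℝ) * s.esymm (j - 1) *
      ((((j + 1).factorial * (Multiset.card s - (j + 1)).factorial : ℕ) : ℝ) * s.esymm (j + 1)) ≤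
      (((j.factorial * (Multiset.card s - j).factorial : ℕ) : ℝ) * s.esymm j) ^ 2 := by
  set n := Multiset.card s with hn
  by_cases htriv : s.esymm (j + 1) = 0
  · rw [htriv]
    have : (0:ℝ) ≤ ((((j.factorial * (n - j).factorial : ℕ)) : ℝ) * s.esymm j) ^ 2 := sq_nonneg _
    nlinarith
  -- the polynomial with roots s
  set f : ℝ[X] := (s.map fun r => X - C r).prod with hf
  have hfdeg : f.natDegree = n := natDegree_multiset_prod_X_sub_C_eq_card s
  have hfroots : f.roots = s := roots_multiset_prod_X_sub_C s
  have hfRR : RR f := by unfold RR; rw [hfroots, hfdeg]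
  have hfcoeff : ∀ i : ℕ, i ≤ n → f.coeff (n - i) = (-1) ^ i * s.esymm i := by
    intro i hi
    have h3 : n - i ≤ Multiset.card s := by omega
    rw [hf, Multiset.prod_X_sub_C_coeff s h3, ← hn, Nat.sub_sub_self hi]
  set t := n - (j + 1) with ht
  -- G : degree j+1
  obtain ⟨hGRR, hGdeg⟩ := rr_iterate hfRR t
  set G : ℝ[X] := derivative^[t] f with hG
  have hGdeg' : G.natDegree = j + 1 := by rw [hGdeg, hfdeg]; omega
  have hGcoeff : ∀ i : ℕ, G.coeff i = ((i + t).descFactorial t : ℝ) * f.coeff (i + t) := by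
    intro i
    rw [hG, coeff_iterate_derivative, nsmul_eq_mul]
  have hg0 : G.coeff 0 = (t.descFactorial t : ℝ) * ((-1) ^ (j + 1) * s.esymm (j + 1)) := by
    rw [hGcoeff 0, show 0 + t = n - (j + 1) by omega, hfcoeff (j + 1) (by omega)]
  have hg1 : G.coeff 1 = ((1 + t).descFactorial t : ℝ) * ((-1) ^ j * s.esymm j) := by
    rw [hGcoeff 1, show (1 : ℕ) + t = n - j by omega, hfcoeff j (by omega)]
  have hg2 : G.coeff 2 = ((2 + t).descFactorial t : ℝ) * ((-1) ^ (j - 1) * s.esymm (j - 1)) := by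
    rw [hGcoeff 2, show (2 : ℕ) + t = n - (j - 1) by omega, hfcoeff (j - 1) (by omega)]
  have hG0ne : G.coeff 0 ≠ 0 := by
    rw [hg0]
    have hd : (0:ℝ) < (t.descFactorial t : ℝ) := by
      rw [Nat.descFactorial_self]; exact_mod_cast Nat.factorial_pos t
    have hsgn : ((-1 : ℝ)) ^ (j + 1) ≠ 0 := by positivity
    exact mul_ne_zero (ne_of_gt hd) (mul_ne_zero hsgn htriv)
  obtain ⟨hHRR, hHdeg⟩ := rr_reverse hGRR hG0ne
  set H : ℝ[X] := G.reverse with hH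
  rw [hGdeg'] at hHdeg
  have hHcoeff : ∀ i : ℕ, i ≤ j + 1 → H.coeff i = G.coeff (j + 1 - i) := by
    intro i hi
    rw [hH, coeff_reverse, hGdeg', revAt_le hi]
  obtain ⟨hQRR, hQdeg⟩ := rr_iterate hHRR (j - 1)
  set P : ℝ[X] := derivative^[j - 1] H with hP
  have hQdeg' : P.natDegree = 2 := by rw [hQdeg, hHdeg]; omega
  have hPcoeff : ∀ i : ℕ, P.coeff i = ((i + (j - 1)).descFactorial (j - 1) : ℝ) * H.coeff (i + (j - 1)) := by
    intro i
    rw [hP, coeff_iterate_derivative, nsmul_eq_mul]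
  set a := P.coeff 2 with ha'
  set b := P.coeff 1 with hb'
  set c := P.coeff 0 with hc'
  have hav : a = ((j + 1).descFactorial (j - 1) : ℝ) * G.coeff 0 := by
    rw [ha', hPcoeff 2, show (2:ℕ) + (j - 1) = j + 1 by omega, hHcoeff (j+1) le_rfl,
      Nat.sub_self]
  have hbv : b = (j.descFactorial (j - 1) : ℝ) * G.coeff 1 := by
    rw [hb', hPcoeff 1, show (1:ℕ) + (j - 1) = j by omega, hHcoeff j (by omega),
      show j + 1 - j = 1 by omega]
  have hcv : c = ((j - 1).descFactorial (j - 1) : ℝ) * G.coeff 2 := by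
    rw [hc', hPcoeff 0, show (0:ℕ) + (j - 1) = j - 1 by omega, hHcoeff (j-1) (by omega),
      show j + 1 - (j - 1) = 2 by omega]
  -- P has a real root
  have hPne : P ≠ 0 := by
    intro hz
    rw [hz] at hQdeg'
    simp at hQdeg'
  have hrootex : ∃ x : ℝ, P.IsRoot x := by
    have hcard : Multiset.card P.roots = 2 := by rw [hQRR, hQdeg']
    have hne : P.roots ≠ 0 := by
      intro hz; rw [hz] at hcard; simp at hcard
    obtain ⟨x, hx⟩ := Multiset.exists_mem_of_ne_zero hne
    exact ⟨x, (mem_roots hPne).mp hx⟩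
  obtain ⟨x, hx⟩ := hrootex
  have heval : a * (x * x) + b * x + c = 0 := by
    have he : P.eval x = 0 := hx
    rw [eval_eq_sum_range, hQdeg'] at he
    rw [Finset.sum_range_succ, Finset.sum_range_succ, Finset.sum_range_one] at he
    rw [ha', hb', hc']
    nlinarith [he]
  have hdisc : 0 ≤ b ^ 2 - 4 * (a * c) := by
    have hd := discrim_eq_sq_of_quadratic_eq_zero heval
    rw [discrim] at hd
    nlinarith [sq_nonneg (2 * a * x + b)]
  -- convert descFactorials to factorials
  have hd0 : ((j - 1).descFactorial (j - 1) : ℝ) = ((j - 1).factorial : ℝ) := by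
    rw [Nat.descFactorial_self]
  have he0 : (t.descFactorial t : ℝ) = (t.factorial : ℝ) := by
    rw [Nat.descFactorial_self]
  have hd1 : (j.descFactorial (j - 1) : ℝ) = (j.factorial : ℝ) := by
    have h3 := Nat.factorial_mul_descFactorial (show j - 1 ≤ j by omega)
    rw [show j - (j - 1) = 1 by omega, Nat.factorial_one, one_mul] at h3
    exact_mod_cast congrArg (Nat.cast : ℕ → ℝ) h3
  have he1 : ((1 + t).descFactorial t : ℝ) = ((1 + t).factorial : ℝ) := by
    have h3 := Nat.factorial_mul_descFactorial (show t ≤ 1 + t by omega)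
    rw [show 1 + t - t = 1 by omega, Nat.factorial_one, one_mul] at h3
    exact_mod_cast congrArg (Nat.cast : ℕ → ℝ) h3
  have hd2 : 2 * ((j + 1).descFactorial (j - 1) : ℝ) = ((j + 1).factorial : ℝ) := by
    have h3 := Nat.factorial_mul_descFactorial (show j - 1 ≤ j + 1 by omega)
    rw [show j + 1 - (j - 1) = 2 by omega] at h3
    have h4 : ((2 : ℕ).factorial * (j + 1).descFactorial (j - 1) : ℝ) = ((j + 1).factorial : ℝ) := by
      exact_mod_cast congrArg (Nat.cast : ℕ → ℝ) h3
    norm_num [Nat.factorial] at h4 ⊢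
    linarith
  have he2 : 2 * ((2 + t).descFactorial t : ℝ) = ((2 + t).factorial : ℝ) := by
    have h3 := Nat.factorial_mul_descFactorial (show t ≤ 2 + t by omega)
    rw [show 2 + t - t = 2 by omega] at h3
    have h4 : ((2 : ℕ).factorial * (2 + t).descFactorial t : ℝ) = ((2 + t).factorial : ℝ) := by
      exact_mod_cast congrArg (Nat.cast : ℕ → ℝ) h3
    norm_num [Nat.factorial] at h4 ⊢
    linarith
  -- sign bookkeeping
  have hε2 : ((-1 : ℝ) ^ j) ^ 2 = 1 := by
    rw [← pow_mul, mul_comm, pow_mul]; norm_num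
  have hb2 : b ^ 2 = ((j.descFactorial (j - 1) : ℝ) * ((1 + t).descFactorial t : ℝ)) ^ 2
      * (s.esymm j) ^ 2 := by
    rw [hbv, hg1]
    linear_combination ((j.descFactorial (j - 1) : ℝ) * ((1 + t).descFactorial t : ℝ)
      * s.esymm j) ^ 2 * hε2
  have hss : ((-1 : ℝ) ^ (j + 1)) * ((-1 : ℝ) ^ (j - 1)) = 1 := by
    rw [← pow_add, show j + 1 + (j - 1) = 2 * j by omega, pow_mul]; norm_num
  have hac : a * c = (((j + 1).descFactorial (j - 1) : ℝ) * ((j - 1).descFactorial (j - 1) : ℝ)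
      * (t.descFactorial t : ℝ) * ((2 + t).descFactorial t : ℝ))
      * (s.esymm (j + 1) * s.esymm (j - 1)) := by
    rw [hav, hcv, hg0, hg2]
    linear_combination (((j + 1).descFactorial (j - 1) : ℝ) * ((j - 1).descFactorial (j - 1) : ℝ)
      * (t.descFactorial t : ℝ) * ((2 + t).descFactorial t : ℝ)
      * (s.esymm (j + 1) * s.esymm (j - 1))) * hss
  -- rewrite the goal indices and conclude
  rw [show n - (j - 1) = 2 + t by omega, show n - j = 1 + t by omega]
  push_cast
  rw [← hd0, ← he0, ← hd1, ← he1, ← hd2, ← he2]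
  rw [hb2, hac] at hdisc
  nlinarith [hdisc]

lemma esymmR_eq_esymm {n : ℕ} (lam : Fin n → ℝ) (i : ℕ) :
    esymmR (i : ℤ) lam = (Multiset.map lam Finset.univ.val).esymm i := by
  rw [esymmR, sigmaOn, if_pos (by exact_mod_cast Int.ofNat_nonneg i),
    Finset.esymm_map_val]
  norm_num

end SigmaAux

open SigmaAux

/-- **Lower bound for `σ_{k-1}`** (Lemma 2.5 (a)): there is `c₀ > 0`
(depending on `n, k, α, N₀`) such that every `λ ∈ Γ_{k-1}` with
`σ_k(λ) + α σ_{k-1}(λ) ≥ N₀` satisfies `σ_{k-1}(λ) ≥ c₀`. -/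
theorem sigma_km1_lower_bound
    {n k : ℕ} (hk : 2 ≤ k) (hkn : k ≤ n) (α N₀ : ℝ) (hα : 0 < α) (hN₀ : 0 < N₀) :
    ∃ c₀ : ℝ, 0 < c₀ ∧
      ∀ lam ∈ GammaCone n (k - 1),
        N₀ ≤ Sfun α (k : ℤ) lam → c₀ ≤ esymmR ((k : ℤ) - 1) lam := by
  have hn2 : 2 ≤ n := le_trans hk hkn
  have hchoosepos : (0 : ℝ) < (n.choose (k - 1) : ℝ) := by
    exact_mod_cast Nat.choose_pos (show k - 1 ≤ n by omega)
  have hnα : (0 : ℝ) < (n : ℝ) + α := by positivity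
  refine ⟨min (n.choose (k - 1) : ℝ) (N₀ / ((n : ℝ) + α)), lt_min hchoosepos (div_pos hN₀ hnα), ?_⟩
  intro lam hG hS
  set s : Multiset ℝ := Multiset.map lam Finset.univ.val with hs
  have hcard : Multiset.card s = n := by simp [hs]
  have hkm1 : ((k : ℤ) - 1) = ((k - 1 : ℕ) : ℤ) := by
    have : (1 : ℕ) ≤ k := by omega
    push_cast [Nat.cast_sub this]
    ring
  rw [hkm1, esymmR_eq_esymm lam (k - 1), ← hs]
  have hEpos : ∀ i : ℕ, 1 ≤ i → i ≤ k - 1 → 0 < s.esymm i := by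
    intro i hi1 hi2
    rw [hs, ← esymmR_eq_esymm lam i]
    exact hG i hi1 hi2
  have hE0 : s.esymm 0 = 1 := by
    simp [Multiset.esymm]
  have hEkm1 : 0 < s.esymm (k - 1) := hEpos (k - 1) (by omega) le_rfl
  by_cases hbig : (n.choose (k - 1) : ℝ) ≤ s.esymm (k - 1)
  · exact le_trans (min_le_left _ _) hbig
  push_neg at hbig
  have hkey : s.esymm k ≤ (n : ℝ) * s.esymm (k - 1) := by
    rcases le_or_gt (s.esymm k) 0 with hk0 | hk0
    · have h4 : (0 : ℝ) ≤ (n : ℝ) * s.esymm (k - 1) := by positivity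
      linarith
    · set Q : ℕ → ℝ := fun i => ((i.factorial * (n - i).factorial : ℕ) : ℝ) * s.esymm i with hQ
      have hQpos : ∀ i ≤ k, 0 < Q i := by
        intro i hi
        have hfac : (0 : ℝ) < ((i.factorial * (n - i).factorial : ℕ) : ℝ) := by
          exact_mod_cast Nat.mul_pos (Nat.factorial_pos i) (Nat.factorial_pos (n - i))
        rcases Nat.eq_zero_or_pos i with rfl | hi1
        · rw [hQ]; simpa [hE0] using hfac
        · rcases eq_or_lt_of_le hi with rfl | hik
          · exact mul_pos hfac hk0
          · exact mul_pos hfac (hEpos i hi1 (by omega))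
      have hQlc : ∀ i, 1 ≤ i → i + 1 ≤ k → Q (i - 1) * Q (i + 1) ≤ Q i ^ 2 := by
        intro i hi1 hik
        have h5 := newton_Q s i hi1 (by omega)
        rw [hcard] at h5
        exact h5
      have hQle : Q (k - 1) ≤ Q 0 := by
        have hid : (k - 1).factorial * (n - (k - 1)).factorial * n.choose (k - 1) = n.factorial := by
          have := Nat.choose_mul_factorial_mul_factorial (show k - 1 ≤ n by omega)
          linarith [this]
        have hidR : (((k - 1).factorial * (n - (k - 1)).factorial : ℕ) : ℝ) * (n.choose (k - 1) : ℝ)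
            = (n.factorial : ℝ) := by exact_mod_cast congrArg (Nat.cast : ℕ → ℝ) hid
        have hfacpos : (0 : ℝ) < (((k - 1).factorial * (n - (k - 1)).factorial : ℕ) : ℝ) := by
          exact_mod_cast Nat.mul_pos (Nat.factorial_pos _) (Nat.factorial_pos _)
        rw [hQ]
        simp only [hE0]
        calc (((k - 1).factorial * (n - (k - 1)).factorial : ℕ) : ℝ) * s.esymm (k - 1)
            ≤ (((k - 1).factorial * (n - (k - 1)).factorial : ℕ) : ℝ) * (n.choose (k - 1) : ℝ) := by
              apply mul_le_mul_of_nonneg_left (le_of_lt hbig) (le_of_lt hfacpos)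
          _ = (n.factorial : ℝ) := hidR
          _ ≤ ((Nat.factorial 0 * (n - 0).factorial : ℕ) : ℝ) * 1 := by
              simp [Nat.factorial]
      have hQk := chain_le Q k hk hQpos hQlc hQle
      -- Q k ≤ Q (k-1) : k! (n-k)! E_k ≤ (k-1)! (n-k+1)! E_{k-1}
      rw [hQ] at hQk
      simp only at hQk
      have hfack : (k.factorial * (n - k).factorial : ℕ) = k * ((k-1).factorial * (n - k).factorial) := by
        conv_lhs => rw [show k = (k-1) + 1 by omega]
        rw [Nat.factorial_succ]
        rw [show k - 1 + 1 = k by omega]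
        ring
      have hfackm1 : ((k-1).factorial * (n - (k - 1)).factorial : ℕ)
          = (n - k + 1) * ((k-1).factorial * (n - k).factorial) := by
        rw [show n - (k - 1) = (n - k) + 1 by omega, Nat.factorial_succ]
        ring
      rw [hfack, hfackm1] at hQk
      push_cast at hQk
      have hD : (0:ℝ) < ((k-1).factorial : ℝ) * ((n - k).factorial : ℝ) := by
        have := Nat.factorial_pos (k-1); have := Nat.factorial_pos (n-k); positivity
      have hnk : ((n - k : ℕ) : ℝ) = (n : ℝ) - (k : ℝ) := by
        rw [Nat.cast_sub hkn]
      have h6 : ((k : ℝ) * s.esymm k) * (((k-1).factorial : ℝ) * ((n-k).factorial : ℝ)) ≤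
          ((((n-k:ℕ):ℝ) + 1) * s.esymm (k-1)) * (((k-1).factorial : ℝ) * ((n-k).factorial : ℝ)) := by
        linarith [hQk]
      have h7 := le_of_mul_le_mul_right h6 hD
      rw [hnk] at h7
      have hk1 : (1 : ℝ) ≤ (k : ℝ) := by exact_mod_cast (show 1 ≤ k by omega)
      have h8 : s.esymm k ≤ (k : ℝ) * s.esymm k := by nlinarith [hk0, hk1]
      have h9 : ((n:ℝ) - (k:ℝ) + 1) * s.esymm (k-1) ≤ (n:ℝ) * s.esymm (k - 1) := by
        nlinarith [hEkm1, hk1]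
      linarith
  -- finish
  have hS' : N₀ ≤ s.esymm k + α * s.esymm (k - 1) := by
    rw [Sfun, hkm1, esymmR_eq_esymm lam (k - 1), esymmR_eq_esymm lam k, ← hs] at hS
    exact hS
  have hfin : N₀ / ((n : ℝ) + α) ≤ s.esymm (k - 1) := by
    rw [div_le_iff₀ hnα]
    nlinarith [hS', hkey, hEkm1]
  exact le_trans (min_le_right _ _) hfin
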